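/- Low-frequency smallness of the Boussinesq evolution of a wave packet: with f_v as above (supp f_v ⊂ (-v,v)), if 0 < v < min{v₀, δ/4}, 0 < t < 1 and δ/2 < x < δ, then |B_t f_v(x)| ≤ C t v^{-4}, where B_t f_v(x) = ∫ e^{ixξ} e^{it|ξ|√(1+ξ²)} f̂_v(ξ) dξ. -/

import Mathlib

open scoped FourierTransform
open MeasureTheory Real

lemma norm_exp_I_mul_ofReal_sub_one_le (θ : ℝ) :
    ‖Complex.exp (Complex.I * θ) - 1‖ ≤ |θ| := by
  have e : Complex.exp (Complex.I * θ) - 1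
      = ((Real.cos θ - 1 : ℝ) : ℂ) + ((Real.sin θ : ℝ) : ℂ) * Complex.I := by
    rw [mul_comm, Complex.exp_mul_I, ← Complex.ofReal_cos, ← Complex.ofReal_sin]
    push_cast; ring
  have h2 : ‖Complex.exp (Complex.I * θ) - 1‖ ^ 2 = 2 - 2 * Real.cos θ := by
    rw [e, Complex.sq_norm, Complex.normSq_add_mul_I]
    nlinarith [Real.sin_sq_add_cos_sq θ]
  have h3 : ‖Complex.exp (Complex.I * θ) - 1‖ ^ 2 ≤ |θ| ^ 2 := by
    rw [h2, sq_abs]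
    nlinarith [Real.one_sub_sq_div_two_le_cos (x := θ)]
  nlinarith [norm_nonneg (Complex.exp (Complex.I * θ) - 1), abs_nonneg θ]

lemma sqrt_one_add_sq_le (a : ℝ) : Real.sqrt (1 + a ^ 2) ≤ 1 + |a| := by
  rw [show (1 : ℝ) + |a| = Real.sqrt ((1 + |a|) ^ 2) from
    (Real.sqrt_sq (by positivity)).symm]
  apply Real.sqrt_le_sqrt
  nlinarith [abs_nonneg a, sq_abs a]

theorem wave_packet_low_frequency_bound (g : SchwartzMap ℝ ℂ)
    (hg : Function.support (𝓕⁻ (g : ℝ → ℂ)) ⊆ Set.Ioo (-1) 1)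
    (v₀ δ : ℝ) (hv₀ : 0 < v₀) (hδ : 0 < δ) :
    ∃ C : ℝ, 0 < C ∧ ∀ v t x : ℝ,
      0 < v → v < min v₀ (δ / 4) → 0 < t → t < 1 → δ / 2 < x → x < δ →
      ‖∫ ξ : ℝ, Complex.exp (2 * π * Complex.I * ((x * ξ : ℝ) : ℂ)) *
          Complex.exp (Complex.I * ((t * |ξ| * Real.sqrt (1 + ξ ^ 2) : ℝ) : ℂ)) *
          ((v : ℂ) * g (v * ξ + 1 / v))‖ ≤ C * t / v ^ 4 := by
  set M : ℝ := max 1 v₀ with hMdef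
  have hM1 : (1 : ℝ) ≤ M := le_max_left _ _
  have hMpos : (0 : ℝ) < M := lt_of_lt_of_le one_pos hM1
  -- the integrable weight
  have hKint : Integrable (fun u : ℝ => (1 + |u|) ^ 2 * ‖g u‖) := by
    have h0 : Integrable (fun u : ℝ => ‖g u‖) := g.integrable.norm
    have h1 : Integrable (fun u : ℝ => ‖u‖ ^ 1 * ‖g u‖) := g.integrable_pow_mul volume 1
    have h2 : Integrable (fun u : ℝ => ‖u‖ ^ 2 * ‖g u‖) := g.integrable_pow_mul volume 2
    have := (h0.add ((h1.const_mul 2).add h2))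
    refine this.congr (Filter.Eventually.of_forall fun u => ?_)
    simp only [Pi.add_apply, Real.norm_eq_abs]
    ring
  set K : ℝ := ∫ u : ℝ, (1 + |u|) ^ 2 * ‖g u‖ with hKdef
  have hK0 : 0 ≤ K := integral_nonneg fun u => by positivity
  refine ⟨(M ^ 3 + M ^ 2) * K + 1, by positivity, fun v t x hv hvm ht ht1 hx1 hx2 => ?_⟩
  have hvv₀ : v < v₀ := lt_of_lt_of_le hvm (min_le_left _ _)
  have hvδ : v < δ / 4 := lt_of_lt_of_le hvm (min_le_right _ _)
  have hvM : v ≤ M := le_trans hvv₀.le (le_max_right _ _)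
  have hv4 : (0:ℝ) < v ^ 4 := by positivity
  -- notation
  set ph : ℝ → ℂ := fun u => Complex.exp (2 * π * Complex.I * ((x * ((u - 1/v)/v) : ℝ) : ℂ)) with hph
  set θf : ℝ → ℝ := fun u => t * |(u - 1/v)/v| * Real.sqrt (1 + ((u - 1/v)/v) ^ 2) with hθf
  set main : ℝ → ℂ := fun u => ph u * ((v : ℂ) * g u) with hmain
  set err : ℝ → ℂ := fun u => ph u * (Complex.exp (Complex.I * θf u) - 1) * ((v : ℂ) * g u)
    with herr
  set G : ℝ → ℂ := fun u => Complex.exp (2 * π * Complex.I * ((x * ((u - 1/v)/v) : ℝ) : ℂ)) *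
      Complex.exp (Complex.I * ((t * |(u - 1/v)/v| * Real.sqrt (1 + ((u - 1/v)/v) ^ 2) : ℝ) : ℂ)) *
      ((v : ℂ) * g u) with hG
  have hcomp : ∀ ξ : ℝ, Complex.exp (2 * π * Complex.I * ((x * ξ : ℝ) : ℂ)) *
          Complex.exp (Complex.I * ((t * |ξ| * Real.sqrt (1 + ξ ^ 2) : ℝ) : ℂ)) *
          ((v : ℂ) * g (v * ξ + 1 / v)) = G (v * ξ + 1 / v) := by
    intro ξ
    have hξ : (v * ξ + 1 / v - 1 / v) / v = ξ := by field_simp; ring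
    simp only [hG, hξ]
  have hGsplit : ∀ u : ℝ, G u = main u + err u := by
    intro u
    simp only [hG, hmain, herr, hph, hθf]
    ring
  -- norm of phase is 1
  have hph1 : ∀ u : ℝ, ‖ph u‖ = 1 := by
    intro u
    simp only [hph]
    rw [show (2 * π * Complex.I * ((x * ((u - 1/v)/v) : ℝ) : ℂ))
        = (((2 * π * (x * ((u - 1/v)/v))) : ℝ) : ℂ) * Complex.I by push_cast; ring]
    rw [Complex.norm_exp_ofReal_mul_I]
  -- continuity / measurability
  have hphc : Continuous ph := by
    apply Complex.continuous_exp.comp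
    fun_prop
  have herrphc : Continuous fun u : ℝ => Complex.exp (Complex.I * θf u) - 1 := by
    apply Continuous.sub _ continuous_const
    apply Complex.continuous_exp.comp
    apply Continuous.mul continuous_const
    apply Complex.continuous_ofReal.comp
    apply Continuous.mul (by fun_prop)
    exact Real.continuous_sqrt.comp (by fun_prop)
  have hgint : Integrable (fun u : ℝ => (v : ℂ) * g u) := g.integrable.const_mul _
  have hmain_int : Integrable main :=
    hgint.bdd_mul hphc.aestronglyMeasurable (c := 1) (Filter.Eventually.of_forall fun u => (hph1 u).le)
  have herr_int : Integrable err := by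
    refine hgint.bdd_mul ((hphc.mul herrphc).aestronglyMeasurable) (c := 2) (Filter.Eventually.of_forall fun u => ?_)
    rw [norm_mul, hph1 u, one_mul]
    calc ‖Complex.exp (Complex.I * θf u) - 1‖
        ≤ ‖Complex.exp (Complex.I * θf u)‖ + 1 := by
          simpa using norm_sub_le (Complex.exp (Complex.I * θf u)) 1
      _ ≤ 2 := by
          rw [show (Complex.I * (θf u : ℂ)) = ((θf u : ℝ) : ℂ) * Complex.I by ring,
            Complex.norm_exp_ofReal_mul_I]
          norm_num
  -- main term vanishes
  have hFinv0 : 𝓕⁻ (g : ℝ → ℂ) (x / v) = 0 := by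
    by_contra h
    have hmem := hg (Function.mem_support.mpr h)
    have : (1 : ℝ) < x / v := by
      rw [lt_div_iff₀ hv]
      nlinarith
    exact absurd hmem.2 (by linarith)
  have hmain0 : (∫ u : ℝ, main u) = 0 := by
    have heq : ∀ u : ℝ, main u
        = (Complex.exp (2 * π * Complex.I * (((-x / v ^ 2) : ℝ) : ℂ)) * (v : ℂ)) *
          (Complex.exp ((2 * π * (u * (x / v)) : ℝ) * Complex.I) • g u) := by
      intro u
      simp only [hmain, hph, smul_eq_mul]
      have hre : x * ((u - 1/v)/v) = (-x / v ^ 2) + (u * (x / v)) := by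
        field_simp; ring
      have harg : 2 * π * Complex.I * ((x * ((u - 1/v)/v) : ℝ) : ℂ)
          = 2 * π * Complex.I * (((-x / v ^ 2) : ℝ) : ℂ)
            + ((2 * π * (u * (x / v)) : ℝ) : ℂ) * Complex.I := by
        rw [hre]; push_cast; ring
      rw [harg, Complex.exp_add]
      ring
    calc (∫ u : ℝ, main u)
        = ∫ u : ℝ, (Complex.exp (2 * π * Complex.I * (((-x / v ^ 2) : ℝ) : ℂ)) * (v : ℂ)) *
          (Complex.exp ((2 * π * (u * (x / v)) : ℝ) * Complex.I) • g u) := by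
          simp only [heq]
      _ = (Complex.exp (2 * π * Complex.I * (((-x / v ^ 2) : ℝ) : ℂ)) * (v : ℂ)) *
          ∫ u : ℝ, Complex.exp ((2 * π * (u * (x / v)) : ℝ) * Complex.I) • g u :=
          integral_const_mul _ _
      _ = (Complex.exp (2 * π * Complex.I * (((-x / v ^ 2) : ℝ) : ℂ)) * (v : ℂ)) *
          (𝓕⁻ (g : ℝ → ℂ) (x / v)) := by
          congr 1
          rw [Real.fourierInv_eq']
          simp [RCLike.inner_apply, conj_trivial]
          congr 1; funext u; ring_nf
      _ = 0 := by rw [hFinv0, mul_zero]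
  -- pointwise bound on err
  have herr_bound : ∀ u : ℝ, ‖err u‖
      ≤ (M ^ 3 + M ^ 2) * t * v / v ^ 4 * ((1 + |u|) ^ 2 * ‖g u‖) := by
    intro u
    have hθ0 : 0 ≤ θf u := by
      simp only [hθf]
      exact mul_nonneg (mul_nonneg ht.le (abs_nonneg _)) (Real.sqrt_nonneg _)
    have hA : |(u - 1/v)/v| ≤ M * (1 + |u|) / v ^ 2 := by
      have h1' : |(u - 1/v)/v| = |u - 1/v| / v := by
        rw [abs_div, abs_of_pos hv]
      rw [h1']
      have h2' : |u - 1/v| ≤ |u| + 1/v := by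
        have h := abs_sub u (1/v)
        rwa [abs_of_pos (show (0:ℝ) < 1/v by positivity)] at h
      rw [div_le_div_iff₀ hv (by positivity)]
      have hm1 : |u| * v * v ≤ |u| * M * v :=
        mul_le_mul_of_nonneg_right
          (mul_le_mul_of_nonneg_left hvM (abs_nonneg u)) hv.le
      have hm2 : 1 * v ≤ M * v := mul_le_mul_of_nonneg_right hM1 hv.le
      have hid : (1/v) * v ^ 2 = v := by field_simp
      nlinarith [abs_nonneg u, mul_le_mul_of_nonneg_right h2' (sq_nonneg v)]
    have hsq : Real.sqrt (1 + ((u - 1/v)/v) ^ 2) ≤ 1 + |(u - 1/v)/v| :=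
      sqrt_one_add_sq_le _
    have hB : 1 + |(u - 1/v)/v| ≤ (M ^ 2 + M) * (1 + |u|) / v ^ 2 := by
      have h1le : (1:ℝ) ≤ M ^ 2 * (1 + |u|) / v ^ 2 := by
        rw [le_div_iff₀ (by positivity)]
        nlinarith [abs_nonneg u, hvM, hv]
      calc 1 + |(u - 1/v)/v| ≤ M ^ 2 * (1 + |u|) / v ^ 2 + M * (1 + |u|) / v ^ 2 :=
            add_le_add h1le hA
        _ = (M ^ 2 + M) * (1 + |u|) / v ^ 2 := by ring
    have hθle : θf u ≤ (M ^ 3 + M ^ 2) * t * (1 + |u|) ^ 2 / v ^ 4 := by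
      have e1 : θf u ≤ t * |(u - 1/v)/v| * ((M ^ 2 + M) * (1 + |u|) / v ^ 2) := by
        simp only [hθf]
        gcongr
        exact hsq.trans hB
      have e2 : t * |(u - 1/v)/v| * ((M ^ 2 + M) * (1 + |u|) / v ^ 2)
          ≤ t * (M * (1 + |u|) / v ^ 2) * ((M ^ 2 + M) * (1 + |u|) / v ^ 2) := by
        gcongr
      calc θf u ≤ _ := e1
        _ ≤ _ := e2
        _ = (M ^ 3 + M ^ 2) * t * (1 + |u|) ^ 2 / v ^ 4 := by ring
    have hnval : ‖err u‖ = ‖Complex.exp (Complex.I * θf u) - 1‖ * (v * ‖g u‖) := by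
      simp only [herr]
      rw [norm_mul, norm_mul, hph1 u, one_mul, norm_mul, Complex.norm_real,
        Real.norm_eq_abs, abs_of_pos hv]
    rw [hnval]
    have hb1 : ‖Complex.exp (Complex.I * θf u) - 1‖ ≤ θf u := by
      have := norm_exp_I_mul_ofReal_sub_one_le (θf u)
      rwa [abs_of_nonneg hθ0] at this
    calc ‖Complex.exp (Complex.I * θf u) - 1‖ * (v * ‖g u‖)
        ≤ ((M ^ 3 + M ^ 2) * t * (1 + |u|) ^ 2 / v ^ 4) * (v * ‖g u‖) := by
          apply mul_le_mul_of_nonneg_right (hb1.trans hθle)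
          positivity
      _ = (M ^ 3 + M ^ 2) * t * v / v ^ 4 * ((1 + |u|) ^ 2 * ‖g u‖) := by ring
  -- change of variables
  have hsub : (∫ ξ : ℝ, Complex.exp (2 * π * Complex.I * ((x * ξ : ℝ) : ℂ)) *
          Complex.exp (Complex.I * ((t * |ξ| * Real.sqrt (1 + ξ ^ 2) : ℝ) : ℂ)) *
          ((v : ℂ) * g (v * ξ + 1 / v))) = |v⁻¹| • ∫ u : ℝ, G u := by
    calc (∫ ξ : ℝ, Complex.exp (2 * π * Complex.I * ((x * ξ : ℝ) : ℂ)) *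
          Complex.exp (Complex.I * ((t * |ξ| * Real.sqrt (1 + ξ ^ 2) : ℝ) : ℂ)) *
          ((v : ℂ) * g (v * ξ + 1 / v)))
        = ∫ ξ : ℝ, G (v * ξ + 1 / v) := by simp only [hcomp]
      _ = |v⁻¹| • ∫ y : ℝ, G (y + 1 / v) :=
          Measure.integral_comp_mul_left (fun y => G (y + 1 / v)) v
      _ = |v⁻¹| • ∫ u : ℝ, G u := by rw [integral_add_right_eq_self]
  have hGval : (∫ u : ℝ, G u) = ∫ u : ℝ, err u := by
    calc (∫ u : ℝ, G u) = ∫ u : ℝ, (main u + err u) := by simp only [hGsplit]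
      _ = (∫ u : ℝ, main u) + ∫ u : ℝ, err u := integral_add hmain_int herr_int
      _ = ∫ u : ℝ, err u := by rw [hmain0, zero_add]
  have hnormerr : ‖∫ u : ℝ, err u‖ ≤ (M ^ 3 + M ^ 2) * t * v / v ^ 4 * K := by
    calc ‖∫ u : ℝ, err u‖ ≤ ∫ u : ℝ, ‖err u‖ := norm_integral_le_integral_norm _
      _ ≤ ∫ u : ℝ, (M ^ 3 + M ^ 2) * t * v / v ^ 4 * ((1 + |u|) ^ 2 * ‖g u‖) :=
          integral_mono herr_int.norm (hKint.const_mul _) herr_bound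
      _ = (M ^ 3 + M ^ 2) * t * v / v ^ 4 * K := integral_const_mul _ _
  rw [hsub, hGval, norm_smul, Real.norm_eq_abs, abs_abs, abs_inv, abs_of_pos hv]
  calc v⁻¹ * ‖∫ u : ℝ, err u‖
      ≤ v⁻¹ * ((M ^ 3 + M ^ 2) * t * v / v ^ 4 * K) := by
        apply mul_le_mul_of_nonneg_left hnormerr (by positivity)
    _ = (M ^ 3 + M ^ 2) * K * t / v ^ 4 := by field_simp
    _ ≤ ((M ^ 3 + M ^ 2) * K + 1) * t / v ^ 4 := by
        have h : (M ^ 3 + M ^ 2) * K * t ≤ ((M ^ 3 + M ^ 2) * K + 1) * t := by nlinarith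
        exact (div_le_div_iff_of_pos_right hv4).mpr h
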